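/- Let (V,E) be a finite simple graph with |V| = n. Then the product of the number of cliques of G with the number of cocliques of G is at most (n+1) · 2^n. -/

import Mathlib

open Finset

namespace CliquesMulCocliques

open scoped Classical

variable {V : Type} [Fintype V] (G : SimpleGraph V)

/-- The family of cliques `C ⊆ S` whose complement in `S` is independent. -/
noncomputable def Fam (S : Finset V) : Finset (Finset V) :=
  S.powerset.filter
    (fun C => G.IsClique ↑C ∧ (↑(S \ C) : Set V).Pairwise fun u v => ¬ G.Adj u v)

lemma mem_Fam {S C : Finset V} :
    C ∈ Fam G S ↔ C ⊆ S ∧ G.IsClique ↑C ∧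
      (↑(S \ C) : Set V).Pairwise fun u v => ¬ G.Adj u v := by
  simp [Fam, and_assoc]

lemma diff_card_le {S C1 C2 : Finset V} (h1 : C1 ∈ Fam G S) (h2 : C2 ∈ Fam G S) :
    (C1 \ C2).card ≤ 1 := by
  rw [mem_Fam] at h1 h2
  by_contra h
  push_neg at h
  obtain ⟨a, ha, b, hb, hab⟩ := Finset.one_lt_card.mp h
  have ha1 : a ∈ C1 := (Finset.mem_sdiff.mp ha).1
  have hb1 : b ∈ C1 := (Finset.mem_sdiff.mp hb).1
  have hadj : G.Adj a b := h1.2.1 (by exact_mod_cast ha1) (by exact_mod_cast hb1) hab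
  have ha2 : a ∈ S \ C2 := Finset.mem_sdiff.mpr ⟨h1.1 ha1, (Finset.mem_sdiff.mp ha).2⟩
  have hb2 : b ∈ S \ C2 := Finset.mem_sdiff.mpr ⟨h1.1 hb1, (Finset.mem_sdiff.mp hb).2⟩
  exact h2.2.2 (by exact_mod_cast ha2) (by exact_mod_cast hb2) hab hadj

lemma card_le_card_add_one {S C1 C2 : Finset V} (h1 : C1 ∈ Fam G S) (h2 : C2 ∈ Fam G S) :
    C1.card ≤ C2.card + 1 := by
  have h := Finset.card_inter_add_card_sdiff C1 C2
  have h2' : (C1 ∩ C2).card ≤ C2.card := Finset.card_le_card (Finset.inter_subset_right)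
  have := diff_card_le G h1 h2
  omega

lemma subset_of_card_lt {S C1 C2 : Finset V} (h1 : C1 ∈ Fam G S) (h2 : C2 ∈ Fam G S)
    (hlt : C1.card < C2.card) : C1 ⊆ C2 := by
  have hd := diff_card_le G h2 h1
  have e1 := Finset.card_inter_add_card_sdiff C1 C2
  have e2 := Finset.card_inter_add_card_sdiff C2 C1
  have : (C2 ∩ C1).card = (C1 ∩ C2).card := by rw [Finset.inter_comm]
  have hzero : (C1 \ C2).card = 0 := by omega
  exact Finset.sdiff_eq_empty_iff_subset.mp (Finset.card_eq_zero.mp hzero)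

lemma union_mem_or_inter_mem {S C1 C2 : Finset V} (h1 : C1 ∈ Fam G S) (h2 : C2 ∈ Fam G S) :
    C1 ∪ C2 ∈ Fam G S ∨ C1 ∩ C2 ∈ Fam G S := by
  by_cases hsub : C1 ⊆ C2
  · left; rwa [Finset.union_eq_right.mpr hsub]
  by_cases hsub2 : C2 ⊆ C1
  · left; rwa [Finset.union_eq_left.mpr hsub2]
  obtain ⟨u, hu⟩ := Finset.sdiff_nonempty.mpr hsub
  obtain ⟨w, hw⟩ := Finset.sdiff_nonempty.mpr hsub2
  have hu_uniq : ∀ x ∈ C1 \ C2, x = u :=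
    fun x hx => Finset.card_le_one.mp (diff_card_le G h1 h2) x hx u hu
  have hw_uniq : ∀ x ∈ C2 \ C1, x = w :=
    fun x hx => Finset.card_le_one.mp (diff_card_le G h2 h1) x hx w hw
  rw [mem_Fam] at h1 h2
  have hu1 : u ∈ C1 := (Finset.mem_sdiff.mp hu).1
  have hu2 : u ∉ C2 := (Finset.mem_sdiff.mp hu).2
  have hw2 : w ∈ C2 := (Finset.mem_sdiff.mp hw).1
  have hw1 : w ∉ C1 := (Finset.mem_sdiff.mp hw).2
  by_cases hadj : G.Adj u w
  · left
    rw [mem_Fam]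
    refine ⟨Finset.union_subset h1.1 h2.1, ?_, ?_⟩
    · -- clique
      intro x hx y hy hxy
      simp only [Finset.coe_union, Set.mem_union, Finset.mem_coe] at hx hy
      have key : ∀ a b : V, a ∈ C1 ∨ a ∈ C2 → b ∈ C1 ∨ b ∈ C2 → a ≠ b →
          (a ∈ C1 → b ∈ C1 → G.Adj a b) →
          a ∈ C1 → G.Adj a b := by
        intro a b _ hbm hab hboth ha
        rcases hbm with hb | hb
        · exact hboth ha hb
        · by_cases hb1' : b ∈ C1
          · exact hboth ha hb1'
          · have hbw : b = w := hw_uniq b (Finset.mem_sdiff.mpr ⟨hb, hb1'⟩)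
            by_cases ha2' : a ∈ C2
            · exact h2.2.1 (by exact_mod_cast ha2') (by exact_mod_cast hb) hab
            · have hau : a = u := hu_uniq a (Finset.mem_sdiff.mpr ⟨ha, ha2'⟩)
              rw [hau, hbw]; exact hadj
      rcases hx with hx1 | hx2
      · exact key x y (Or.inl hx1) hy hxy
          (fun hx' hy' => h1.2.1 (by exact_mod_cast hx') (by exact_mod_cast hy') hxy) hx1
      · by_cases hx1' : x ∈ C1
        · exact key x y (Or.inl hx1') hy hxy
            (fun hx' hy' => h1.2.1 (by exact_mod_cast hx') (by exact_mod_cast hy') hxy) hx1'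
        · rcases hy with hy1 | hy2
          · exact (key y x (Or.inl hy1) (Or.inr hx2) hxy.symm
              (fun hy' hx' => h1.2.1 (by exact_mod_cast hy') (by exact_mod_cast hx') hxy.symm)
              hy1).symm
          · exact h2.2.1 (by exact_mod_cast hx2) (by exact_mod_cast hy2) hxy
    · -- independence of S \ (C1 ∪ C2)
      have hsub' : (↑(S \ (C1 ∪ C2)) : Set V) ⊆ ↑(S \ C1) := by
        intro x hx
        simp only [Finset.coe_sdiff, Set.mem_diff, Finset.mem_coe, Finset.coe_union,
          Set.mem_union] at hx ⊢
        exact ⟨hx.1, fun h => hx.2 (Or.inl h)⟩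
      exact h1.2.2.mono hsub'
  · right
    rw [mem_Fam]
    refine ⟨(Finset.inter_subset_left).trans h1.1, h1.2.1.subset (by
      exact_mod_cast Finset.coe_subset.mpr Finset.inter_subset_left), ?_⟩
    intro x hx y hy hxy
    simp only [Finset.coe_sdiff, Set.mem_diff, Finset.mem_coe, Finset.mem_inter] at hx hy
    have main : ∀ a b : V, a ∈ S ∧ ¬(a ∈ C1 ∧ a ∈ C2) → b ∈ S ∧ ¬(b ∈ C1 ∧ b ∈ C2) →
        a ≠ b → a ∈ C1 → ¬ G.Adj a b := by
      intro a b ha hb hab ha1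
      have ha2 : a ∉ C2 := fun h => ha.2 ⟨ha1, h⟩
      have hau : a = u := hu_uniq a (Finset.mem_sdiff.mpr ⟨ha1, ha2⟩)
      by_cases hb1' : b ∈ C1
      · have hb2 : b ∉ C2 := fun h => hb.2 ⟨hb1', h⟩
        have : b = u := hu_uniq b (Finset.mem_sdiff.mpr ⟨hb1', hb2⟩)
        exact absurd (hau.trans this.symm) hab
      · by_cases hb2' : b ∈ C2
        · have hbw : b = w := hw_uniq b (Finset.mem_sdiff.mpr ⟨hb2', hb1'⟩)
          rw [hau, hbw]; exact hadj
        · have haS : a ∈ S \ C2 := Finset.mem_sdiff.mpr ⟨ha.1, ha2⟩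
          have hbS : b ∈ S \ C2 := Finset.mem_sdiff.mpr ⟨hb.1, hb2'⟩
          exact h2.2.2 (by exact_mod_cast haS) (by exact_mod_cast hbS) hab
    by_cases hx1 : x ∈ C1
    · exact main x y hx hy hxy hx1
    · by_cases hy1 : y ∈ C1
      · intro hadj'
        exact main y x hy hx hxy.symm hy1 hadj'.symm
      · have hxS : x ∈ S \ C1 := Finset.mem_sdiff.mpr ⟨hx.1, hx1⟩
        have hyS : y ∈ S \ C1 := Finset.mem_sdiff.mpr ⟨hy.1, hy1⟩
        exact h1.2.2 (by exact_mod_cast hxS) (by exact_mod_cast hyS) hxy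

lemma Fam_card_le (S : Finset V) : (Fam G S).card ≤ S.card + 1 := by
  rcases (Fam G S).eq_empty_or_nonempty with hF | hF
  · simp [hF]
  by_cases hS : S = ∅
  · subst hS
    have : Fam G ∅ ⊆ {∅} := by
      intro C hC
      have : C ⊆ ∅ := (mem_Fam G |>.mp hC).1
      simpa using Finset.subset_empty.mp this
    calc (Fam G (∅ : Finset V)).card ≤ ({∅} : Finset (Finset V)).card :=
          Finset.card_le_card this
      _ ≤ (∅ : Finset V).card + 1 := by simp
  have hS1 : 1 ≤ S.card := Finset.card_pos.mpr (Finset.nonempty_iff_ne_empty.mpr hS)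
  obtain ⟨m, hm, hmin⟩ := Finset.exists_min_image (Fam G S) Finset.card hF
  set A := (Fam G S).filter (fun C => m.card < C.card) with hAdef
  set B := (Fam G S).filter (fun C => ¬ m.card < C.card) with hBdef
  have hsplit : A.card + B.card = (Fam G S).card :=
    Finset.card_filter_add_card_filter_not _
  have hA_mem : ∀ C ∈ A, C ∈ Fam G S ∧ C.card = m.card + 1 := by
    intro C hC
    obtain ⟨hC1, hC2⟩ := Finset.mem_filter.mp hC
    exact ⟨hC1, le_antisymm (card_le_card_add_one G hC1 hm) hC2⟩
  have hB_mem : ∀ C ∈ B, C ∈ Fam G S ∧ C.card = m.card := by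
    intro C hC
    obtain ⟨hC1, hC2⟩ := Finset.mem_filter.mp hC
    exact ⟨hC1, le_antisymm (by omega) (hmin C hC1)⟩
  have hBA : ∀ Cb ∈ B, ∀ Ca ∈ A, Cb ⊆ Ca := by
    intro Cb hCb Ca hCa
    exact subset_of_card_lt G (hB_mem Cb hCb).1 (hA_mem Ca hCa).1
      (by rw [(hB_mem Cb hCb).2, (hA_mem Ca hCa).2]; omega)
  -- intersections of distinct A-elements land in B
  have hAinter : ∀ C1 ∈ A, ∀ C2 ∈ A, C1 ≠ C2 → C1 ∩ C2 ∈ B := by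
    intro C1 hC1 C2 hC2 hne
    have h1 := hA_mem C1 hC1
    have h2 := hA_mem C2 hC2
    have hd1 : (C1 \ C2).card = 1 := by
      have hle := diff_card_le G h1.1 h2.1
      have h0 : (C1 \ C2).card ≠ 0 := by
        intro h0
        have : C1 ⊆ C2 := Finset.sdiff_eq_empty_iff_subset.mp (Finset.card_eq_zero.mp h0)
        exact hne (Finset.eq_of_subset_of_card_le this (by omega))
      omega
    have hinter_card : (C1 ∩ C2).card = m.card := by
      have := Finset.card_inter_add_card_sdiff C1 C2
      omega
    have hunion_card : (C1 ∪ C2).card = m.card + 2 := by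
      have := Finset.card_union_add_card_inter C1 C2
      omega
    rcases union_mem_or_inter_mem G h1.1 h2.1 with hU | hI
    · exfalso
      have := card_le_card_add_one G hU hm
      omega
    · exact Finset.mem_filter.mpr ⟨hI, by omega⟩
  -- unions of distinct B-elements land in A
  have hBunion : ∀ C1 ∈ B, ∀ C2 ∈ B, C1 ≠ C2 → C1 ∪ C2 ∈ A := by
    intro C1 hC1 C2 hC2 hne
    have h1 := hB_mem C1 hC1
    have h2 := hB_mem C2 hC2
    have hd1 : (C1 \ C2).card = 1 := by
      have hle := diff_card_le G h1.1 h2.1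
      have : (C1 \ C2).card ≠ 0 := by
        intro h0
        have : C1 ⊆ C2 := Finset.sdiff_eq_empty_iff_subset.mp (Finset.card_eq_zero.mp h0)
        exact hne (Finset.eq_of_subset_of_card_le this (by omega))
      omega
    have hinter_card : (C1 ∩ C2).card + 1 = m.card := by
      have := Finset.card_inter_add_card_sdiff C1 C2
      omega
    have hunion_card : (C1 ∪ C2).card = m.card + 1 := by
      have := Finset.card_union_add_card_inter C1 C2
      omega
    rcases union_mem_or_inter_mem G h1.1 h2.1 with hU | hI
    · exact Finset.mem_filter.mpr ⟨hU, by omega⟩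
    · exfalso
      have := hmin _ hI
      omega
  by_cases hBcard : B.card ≤ 1
  · -- bound A.card by S.card
    by_cases hAcard : A.card ≤ 1
    · omega
    push_neg at hAcard
    obtain ⟨C1, hC1, C2, hC2, hne⟩ := Finset.one_lt_card.mp hAcard
    set T := C1 ∩ C2 with hTdef
    have hTB : T ∈ B := hAinter C1 hC1 C2 hC2 hne
    have hTcard : T.card = m.card := (hB_mem T hTB).2
    have hT : ∀ Ca ∈ A, T ⊆ Ca := by
      intro Ca hCa
      by_cases hCaC1 : Ca = C1
      · subst hCaC1; exact Finset.inter_subset_left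
      · have h' : Ca ∩ C1 ∈ B := hAinter Ca hCa C1 hC1 hCaC1
        have : Ca ∩ C1 = T := Finset.card_le_one.mp hBcard _ h' _ hTB
        rw [← this]; exact Finset.inter_subset_left
    have hinj : A.card ≤ (S \ T).card := by
      have h1 : A.card ≤ ((S \ T).powersetCard 1).card := by
        apply Finset.card_le_card_of_injOn (fun Ca => Ca \ T)
        · intro Ca hCa
          simp only [Finset.mem_coe, Finset.mem_powersetCard]
          constructor
          · exact Finset.sdiff_subset_sdiff (mem_Fam G |>.mp (hA_mem Ca hCa).1).1
              (le_refl _)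
          · rw [Finset.card_sdiff_of_subset (hT Ca hCa), (hA_mem Ca hCa).2, hTcard]
            omega
        · intro Ca hCa Cb hCb heq
          have e1 : T ∪ (Ca \ T) = Ca := Finset.union_sdiff_of_subset (hT Ca hCa)
          have e2 : T ∪ (Cb \ T) = Cb := Finset.union_sdiff_of_subset (hT Cb hCb)
          have heq' : Ca \ T = Cb \ T := heq
          rw [← e1, ← e2, heq']
      rwa [Finset.card_powersetCard, Nat.choose_one_right] at h1
    have hTS : (S \ T).card ≤ S.card := Finset.card_le_card (Finset.sdiff_subset)
    omega
  · push_neg at hBcard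
    obtain ⟨B1, hB1, B2, hB2, hne⟩ := Finset.one_lt_card.mp hBcard
    set W := B1 ∪ B2 with hWdef
    have hWA : W ∈ A := hBunion B1 hB1 B2 hB2 hne
    have hWcard : W.card = m.card + 1 := (hA_mem W hWA).2
    have hAone : A ⊆ {W} := by
      intro Ca hCa
      have h1 : B1 ⊆ Ca := hBA B1 hB1 Ca hCa
      have h2 : B2 ⊆ Ca := hBA B2 hB2 Ca hCa
      have hWCa : W ⊆ Ca := Finset.union_subset h1 h2
      have : W = Ca := Finset.eq_of_subset_of_card_le hWCa
        (by rw [hWcard, (hA_mem Ca hCa).2])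
      simp [← this]
    have hAcard : A.card ≤ 1 := le_trans (Finset.card_le_card hAone) (by simp)
    have hBW : ∀ Cb ∈ B, Cb ⊆ W := fun Cb hCb => hBA Cb hCb W hWA
    have hWS : W ⊆ S := (mem_Fam G |>.mp (hA_mem W hWA).1).1
    have hinj : B.card ≤ W.card := by
      have h1 : B.card ≤ (W.powersetCard 1).card := by
        apply Finset.card_le_card_of_injOn (fun Cb => W \ Cb)
        · intro Cb hCb
          simp only [Finset.mem_coe, Finset.mem_powersetCard]
          refine ⟨Finset.sdiff_subset, ?_⟩
          rw [Finset.card_sdiff_of_subset (hBW Cb hCb), hWcard, (hB_mem Cb hCb).2]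
          omega
        · intro Ca hCa Cb hCb heq
          have e1 : W \ (W \ Ca) = Ca := Finset.sdiff_sdiff_eq_self (hBW Ca hCa)
          have e2 : W \ (W \ Cb) = Cb := Finset.sdiff_sdiff_eq_self (hBW Cb hCb)
          have heq' : W \ Ca = W \ Cb := heq
          rw [← e1, ← e2, heq']
      rwa [Finset.card_powersetCard, Nat.choose_one_right] at h1
    have : W.card ≤ S.card := Finset.card_le_card hWS
    omega

/-- The clique finset and coclique finset. -/
noncomputable def CF : Finset (Finset V) :=
  Finset.univ.filter fun C => G.IsClique (↑C : Set V)

noncomputable def IF : Finset (Finset V) :=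
  Finset.univ.filter fun I => (↑I : Set V).Pairwise fun u v => ¬ G.Adj u v

lemma mem_CF {C : Finset V} : C ∈ CF G ↔ G.IsClique (↑C : Set V) := by
  simp [CF]

lemma mem_IF {I : Finset V} :
    I ∈ IF G ↔ (↑I : Set V).Pairwise fun u v => ¬ G.Adj u v := by
  simp [IF]

lemma inter_card_le_one {C I : Finset V} (hC : C ∈ CF G) (hI : I ∈ IF G) :
    (C ∩ I).card ≤ 1 := by
  rw [CF, Finset.mem_filter] at hC
  rw [IF, Finset.mem_filter] at hI
  by_contra h
  push_neg at h
  obtain ⟨a, ha, b, hb, hab⟩ := Finset.one_lt_card.mp h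
  have hadj : G.Adj a b := hC.2 (by exact_mod_cast (Finset.mem_inter.mp ha).1)
    (by exact_mod_cast (Finset.mem_inter.mp hb).1) hab
  exact hI.2 (by exact_mod_cast (Finset.mem_inter.mp ha).2)
    (by exact_mod_cast (Finset.mem_inter.mp hb).2) hab hadj

lemma fst_eq_of_inter {S : Finset V} {p q : Finset V × Finset V}
    (hp : p ∈ (CF G ×ˢ IF G).filter (fun p => p.1 ∪ p.2 = S))
    (hq : q ∈ (CF G ×ˢ IF G).filter (fun p => p.1 ∪ p.2 = S))
    {v : V} (hpv : v ∈ p.1 ∩ p.2) (hqv : v ∈ q.1 ∩ q.2)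
    (hs : p.1 ∩ p.2 = q.1 ∩ q.2) : p.1 ⊆ q.1 := by
  obtain ⟨hpm, hpS⟩ := Finset.mem_filter.mp hp
  obtain ⟨hqm, hqS⟩ := Finset.mem_filter.mp hq
  obtain ⟨hpC, hpI⟩ := Finset.mem_product.mp hpm
  obtain ⟨hqC, hqI⟩ := Finset.mem_product.mp hqm
  intro u hu
  by_contra hu1
  have huv : u ≠ v := by
    rintro rfl
    exact hu1 (Finset.mem_inter.mp (hs ▸ hpv)).1
  have hu2 : u ∈ q.2 := by
    have : u ∈ q.1 ∪ q.2 := by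
      rw [hqS, ← hpS]; exact Finset.mem_union_left _ hu
    rcases Finset.mem_union.mp this with h | h
    · exact absurd h hu1
    · exact h
  have hv2 : v ∈ q.2 := (Finset.mem_inter.mp hqv).2
  have hnadj : ¬ G.Adj u v :=
    (mem_IF G |>.mp hqI) (by exact_mod_cast hu2) (by exact_mod_cast hv2) huv
  have hadj : G.Adj u v :=
    (mem_CF G |>.mp hpC) (by exact_mod_cast hu)
      (by exact_mod_cast (Finset.mem_inter.mp hpv).1) huv
  exact hnadj hadj

lemma snd_determined {S : Finset V} {p : Finset V × Finset V}
    (hp : p ∈ (CF G ×ˢ IF G).filter (fun p => p.1 ∪ p.2 = S)) :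
    p.2 = (S \ p.1) ∪ (p.1 ∩ p.2) := by
  obtain ⟨hpm, hpS⟩ := Finset.mem_filter.mp hp
  ext x
  simp only [Finset.mem_union, Finset.mem_sdiff, Finset.mem_inter]
  constructor
  · intro hx
    by_cases hx1 : x ∈ p.1
    · exact Or.inr ⟨hx1, hx⟩
    · exact Or.inl ⟨by rw [← hpS]; exact Finset.mem_union_right _ hx, hx1⟩
  · rintro (⟨hxS, hx1⟩ | ⟨_, hx2⟩)
    · rcases Finset.mem_union.mp (hpS ▸ hxS : x ∈ p.1 ∪ p.2) with h | h
      · exact absurd h hx1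
      · exact h
    · exact hx2

lemma fiber_card_le (S : Finset V) :
    ((CF G ×ˢ IF G).filter (fun p => p.1 ∪ p.2 = S)).card ≤ 2 * S.card + 1 := by
  set P := (CF G ×ˢ IF G).filter (fun p => p.1 ∪ p.2 = S) with hPdef
  have hsplit : (P.filter (fun p => p.1 ∩ p.2 = ∅)).card
      + (P.filter (fun p => ¬ p.1 ∩ p.2 = ∅)).card = P.card :=
    Finset.card_filter_add_card_filter_not _
  have h1 : (P.filter (fun p => p.1 ∩ p.2 = ∅)).card ≤ S.card + 1 := by
    have : (P.filter (fun p => p.1 ∩ p.2 = ∅)).card ≤ (Fam G S).card := by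
      apply Finset.card_le_card_of_injOn Prod.fst
      · intro p hp
        obtain ⟨hpP, hpe⟩ := Finset.mem_filter.mp hp
        obtain ⟨hpm, hpS⟩ := Finset.mem_filter.mp hpP
        obtain ⟨hpC, hpI⟩ := Finset.mem_product.mp hpm
        have hSd : S \ p.1 = p.2 := by
          have := snd_determined G hpP
          rw [hpe] at this
          simp at this
          exact this.symm
        rw [Finset.mem_coe, mem_Fam]
        refine ⟨by rw [← hpS]; exact Finset.subset_union_left,
          mem_CF G |>.mp hpC, ?_⟩
        rw [hSd]
        exact mem_IF G |>.mp hpI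
      · intro p hp q hq heq
        obtain ⟨hpP, hpe⟩ := Finset.mem_filter.mp hp
        obtain ⟨hqP, hqe⟩ := Finset.mem_filter.mp hq
        have heq' : p.1 = q.1 := heq
        have h2 : p.2 = q.2 := by
          have e1 := snd_determined G hpP
          have e2 := snd_determined G hqP
          rw [hpe] at e1; rw [hqe] at e2
          rw [e1, e2, heq']
        exact Prod.ext heq' h2
    exact this.trans (Fam_card_le G S)
  have h2 : (P.filter (fun p => ¬ p.1 ∩ p.2 = ∅)).card ≤ S.card := by
    have hcard : (P.filter (fun p => ¬ p.1 ∩ p.2 = ∅)).card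
        ≤ (S.image (fun v => ({v} : Finset V))).card := by
      apply Finset.card_le_card_of_injOn (fun p => p.1 ∩ p.2)
      · intro p hp
        obtain ⟨hpP, hpe⟩ := Finset.mem_filter.mp hp
        obtain ⟨hpm, hpS⟩ := Finset.mem_filter.mp hpP
        obtain ⟨hpC, hpI⟩ := Finset.mem_product.mp hpm
        have hle : (p.1 ∩ p.2).card = 1 := by
          have := inter_card_le_one G hpC hpI
          have hne : (p.1 ∩ p.2).card ≠ 0 := fun h =>
            hpe (Finset.card_eq_zero.mp h)
          omega
        obtain ⟨v, hv⟩ := Finset.card_eq_one.mp hle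
        have hvS : v ∈ S := by
          rw [← hpS]
          exact Finset.mem_union_left _
            (Finset.mem_inter.mp (hv ▸ Finset.mem_singleton_self v)).1
        exact Finset.mem_image.mpr ⟨v, hvS, hv.symm⟩
      · intro p hp q hq heq
        have heq' : p.1 ∩ p.2 = q.1 ∩ q.2 := heq
        obtain ⟨hpP, hpe⟩ := Finset.mem_filter.mp hp
        obtain ⟨hqP, hqe⟩ := Finset.mem_filter.mp hq
        obtain ⟨v, hv⟩ := Finset.nonempty_iff_ne_empty.mpr hpe
        have hqv : v ∈ q.1 ∩ q.2 := heq' ▸ hv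
        have hfst : p.1 = q.1 :=
          Finset.Subset.antisymm (fst_eq_of_inter G hpP hqP hv hqv heq')
            (fst_eq_of_inter G hqP hpP hqv hv heq'.symm)
        have hsnd : p.2 = q.2 := by
          have e1 := snd_determined G hpP
          have e2 := snd_determined G hqP
          rw [e1, e2, heq', hfst]
        exact Prod.ext hfst hsnd
    have : (S.image (fun v => ({v} : Finset V))).card = S.card :=
      Finset.card_image_of_injective _ Finset.singleton_injective
    omega
  omega

lemma sum_aux (u : Finset V) :
    ∑ S ∈ u.powerset, (2 * S.card + 1) = (u.card + 1) * 2 ^ u.card := by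
  induction u using Finset.induction_on with
  | empty => simp
  | insert a s ha ih =>
    rw [Finset.powerset_insert, Finset.sum_union, Finset.sum_image]
    · have h1 : ∀ t ∈ s.powerset, (insert a t).card = t.card + 1 := by
        intro t ht
        exact Finset.card_insert_of_notMem fun h => ha (Finset.mem_powerset.mp ht h)
      have h2 : ∑ t ∈ s.powerset, (2 * (insert a t).card + 1)
          = ∑ t ∈ s.powerset, (2 * t.card + 1 + 2) := by
        apply Finset.sum_congr rfl
        intro t ht
        rw [h1 t ht]
        ring
      have h3 : ∑ t ∈ s.powerset, (2 * t.card + 1 + 2)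
          = (∑ t ∈ s.powerset, (2 * t.card + 1)) + ∑ _t ∈ s.powerset, 2 :=
        Finset.sum_add_distrib
      rw [h2, h3, ih, Finset.sum_const, Finset.card_powerset, smul_eq_mul,
        Finset.card_insert_of_notMem ha]
      ring
    · intro t ht t' ht' heq
      have h1 : a ∉ t := fun h => ha (Finset.mem_powerset.mp ht h)
      have h2 : a ∉ t' := fun h => ha (Finset.mem_powerset.mp ht' h)
      rw [← Finset.erase_insert h1, ← Finset.erase_insert h2, heq]
    · rw [Finset.disjoint_right]
      intro t ht htp
      obtain ⟨t', ht', rfl⟩ := Finset.mem_image.mp ht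
      exact ha (Finset.mem_powerset.mp htp (Finset.mem_insert_self a t'))

lemma ncard_eq_card_filter (p : Set V → Prop) :
    {X : Set V | p X}.ncard = (Finset.univ.filter fun A : Finset V => p ↑A).card := by
  have h1 : {X : Set V | p X} = (fun A : Finset V => (↑A : Set V)) ''
      {A : Finset V | p ↑A} := by
    ext X
    simp only [Set.mem_image, Set.mem_setOf_eq]
    constructor
    · intro h
      exact ⟨X.toFinset, by simpa [Set.coe_toFinset] using h, Set.coe_toFinset X⟩
    · rintro ⟨A, hA, rfl⟩
      exact hA
  rw [h1, Set.ncard_image_of_injective _ Finset.coe_injective,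
    Set.ncard_eq_toFinset_card', Set.toFinset_setOf]

end CliquesMulCocliques

/-- In any graph with `n` vertices, the product of the number of cliques with
the number of cocliques is at most `(n+1) · 2^n`. -/
theorem cliques_mul_cocliques_le {V : Type} [Fintype V] (G : SimpleGraph V) :
    {X : Set V | G.IsClique X}.ncard *
      {Y : Set V | Y.Pairwise fun u v => ¬ G.Adj u v}.ncard
      ≤ (Fintype.card V + 1) * 2 ^ Fintype.card V := by
  open CliquesMulCocliques in
  open scoped Classical in
  have hC : {X : Set V | G.IsClique X}.ncard = (CF G).card := by
    rw [ncard_eq_card_filter, CF]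
    congr!
  have hI : {Y : Set V | Y.Pairwise fun u v => ¬ G.Adj u v}.ncard = (IF G).card := by
    rw [ncard_eq_card_filter, IF]
    congr!
  rw [hC, hI, ← Finset.card_product]
  have hfib : (CF G ×ˢ IF G).card = ∑ S ∈ (Finset.univ : Finset V).powerset,
      ((CF G ×ˢ IF G).filter (fun p => p.1 ∪ p.2 = S)).card := by
    apply Finset.card_eq_sum_card_fiberwise
    intro p _
    simp [Finset.mem_powerset]
  rw [hfib]
  calc ∑ S ∈ (Finset.univ : Finset V).powerset,
        ((CF G ×ˢ IF G).filter (fun p => p.1 ∪ p.2 = S)).card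
      ≤ ∑ S ∈ (Finset.univ : Finset V).powerset, (2 * S.card + 1) :=
        Finset.sum_le_sum fun S _ => fiber_card_le G S
    _ = ((Finset.univ : Finset V).card + 1) * 2 ^ (Finset.univ : Finset V).card :=
        sum_aux Finset.univ
    _ = (Fintype.card V + 1) * 2 ^ Fintype.card V := by rw [Finset.card_univ]
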